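/- Let r, r′: ℝ²→ℝ² be vector fields all of whose components are polynomials of degree at most 2. If Curl^s r = Curl^s r′ on all of ℝ² and r(x) = r′(x) for every x on some line ℓ⊂ℝ², then r = r′ on all of ℝ². -/

import Mathlib

open Matrix

/-- `Curl φ` of a vector field `φ : ℝ² → ℝ²`: the 2×2 matrix field whose `i`-th
row is `(curl φ_i)ᵀ = (−∂_{x₂} φ_i, ∂_{x₁} φ_i)`. -/
noncomputable def Curl (r : (Fin 2 → ℝ) → Fin 2 → ℝ) (x : Fin 2 → ℝ) :
    Matrix (Fin 2) (Fin 2) ℝ :=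
  Matrix.of fun i j =>
    if j = 0 then -(fderiv ℝ r x ![0, 1] i) else fderiv ℝ r x ![1, 0] i

/-- The symmetric part `Curl^s φ = (Curl φ + (Curl φ)ᵀ)/2`. -/
noncomputable def CurlS (r : (Fin 2 → ℝ) → Fin 2 → ℝ) (x : Fin 2 → ℝ) :
    Matrix (Fin 2) (Fin 2) ℝ :=
  (2⁻¹ : ℝ) • (Curl r x + (Curl r x)ᵀ)

/-- If `r, r' : ℝ² → ℝ²` have components that are polynomials of degree at most 2,
`Curl^s r = Curl^s r'` on all of `ℝ²`, and `r = r'` on some line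
`ℓ = {a + s v : s ∈ ℝ}` (with `v ≠ 0`), then `r = r'` on all of `ℝ²`. -/

private lemma mvpoly_diff (p : MvPolynomial (Fin 2) ℝ) :
    Differentiable ℝ (fun x : Fin 2 → ℝ => MvPolynomial.eval x p) :=
  fun x => ((AnalyticOnNhd.eval_mvPolynomial p) x trivial).differentiableAt

private lemma line2 (s t : ℝ) : HasDerivAt (fun u : ℝ => (![s, u] : Fin 2 → ℝ)) ![0, 1] t := by
  rw [hasDerivAt_pi]
  intro i; fin_cases i <;> simp <;> [exact hasDerivAt_const t s; exact hasDerivAt_id t]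

private lemma line1 (t s : ℝ) : HasDerivAt (fun u : ℝ => (![u, t] : Fin 2 → ℝ)) ![1, 0] s := by
  rw [hasDerivAt_pi]
  intro i; fin_cases i <;> simp <;> [exact hasDerivAt_id s; exact hasDerivAt_const s t]

private noncomputable def proj2 (i : Fin 2) : (Fin 2 → ℝ) →L[ℝ] ℝ :=
  ContinuousLinearMap.proj i

private lemma eta2 (x : Fin 2 → ℝ) : x = ![x 0, x 1] := by
  funext i; fin_cases i <;> rfl

-- fderiv of components
private lemma fderiv_comp_proj (f : (Fin 2 → ℝ) → Fin 2 → ℝ) (hf : Differentiable ℝ f)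
    (x w : Fin 2 → ℝ) (i : Fin 2) :
    fderiv ℝ (fun y => f y i) x w = fderiv ℝ f x w i := by
  have hp : HasFDerivAt (⇑(proj2 i)) (proj2 i) (f x) := (proj2 i).hasFDerivAt
  have h : HasFDerivAt (fun y => f y i) ((proj2 i).comp (fderiv ℝ f x)) x :=
    hp.comp x (hf x).hasFDerivAt
  rw [h.fderiv]; rfl

theorem quadratic_fields_eq_of_curlS_eq_and_eq_on_line
    (r r' : (Fin 2 → ℝ) → Fin 2 → ℝ)
    (hr : ∀ i : Fin 2, ∃ P : MvPolynomial (Fin 2) ℝ,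
      P.totalDegree ≤ 2 ∧ ∀ x, r x i = MvPolynomial.eval x P)
    (hr' : ∀ i : Fin 2, ∃ P : MvPolynomial (Fin 2) ℝ,
      P.totalDegree ≤ 2 ∧ ∀ x, r' x i = MvPolynomial.eval x P)
    (hcurl : ∀ x, CurlS r x = CurlS r' x)
    (a v : Fin 2 → ℝ) (hv : v ≠ 0)
    (hline : ∀ s : ℝ, r (a + s • v) = r' (a + s • v)) :
    ∀ x, r x = r' x := by
  -- componentwise differentiability
  have hcompr : ∀ i : Fin 2, Differentiable ℝ (fun y => r y i) := by
    intro i; obtain ⟨P, _, hP⟩ := hr i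
    have : (fun y => r y i) = fun y => MvPolynomial.eval y P := funext fun y => hP y
    rw [this]; exact mvpoly_diff P
  have hcompr' : ∀ i : Fin 2, Differentiable ℝ (fun y => r' y i) := by
    intro i; obtain ⟨P, _, hP⟩ := hr' i
    have : (fun y => r' y i) = fun y => MvPolynomial.eval y P := funext fun y => hP y
    rw [this]; exact mvpoly_diff P
  have hrd : Differentiable ℝ r := by
    intro x; rw [differentiableAt_pi]; exact fun i => hcompr i x
  have hrd' : Differentiable ℝ r' := by
    intro x; rw [differentiableAt_pi]; exact fun i => hcompr' i x
  -- the difference functions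
  set g0 : (Fin 2 → ℝ) → ℝ := fun x => r x 0 - r' x 0 with hg0def
  set g1 : (Fin 2 → ℝ) → ℝ := fun x => r x 1 - r' x 1 with hg1def
  have hg0 : Differentiable ℝ g0 := (hcompr 0).sub (hcompr' 0)
  have hg1 : Differentiable ℝ g1 := (hcompr 1).sub (hcompr' 1)
  have hsub : ∀ (i : Fin 2) (x w : Fin 2 → ℝ),
      fderiv ℝ (fun y => r y i - r' y i) x w = fderiv ℝ r x w i - fderiv ℝ r' x w i := by
    intro i x w
    rw [fderiv_fun_sub ((hcompr i) x) ((hcompr' i) x)]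
    simp [ContinuousLinearMap.sub_apply, fderiv_comp_proj r hrd, fderiv_comp_proj r' hrd']
  -- the three PDEs
  have h1 : ∀ x, fderiv ℝ g0 x ![0, 1] = 0 := by
    intro x
    have := congrFun (congrFun (hcurl x) 0) 0
    simp [CurlS, Curl, Matrix.add_apply, Matrix.smul_apply, Matrix.transpose_apply,
      Matrix.of_apply] at this
    rw [hg0def, hsub 0 x ![0,1]]
    have h' : fderiv ℝ r x ![0,1] 0 = fderiv ℝ r' x ![0,1] 0 := by linarith
    rw [h']; ring
  have h2 : ∀ x, fderiv ℝ g1 x ![1, 0] = 0 := by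
    intro x
    have := congrFun (congrFun (hcurl x) 1) 1
    simp [CurlS, Curl, Matrix.add_apply, Matrix.smul_apply, Matrix.transpose_apply,
      Matrix.of_apply] at this
    rw [hg1def, hsub 1 x ![1,0]]
    have h' : fderiv ℝ r x ![1,0] 1 = fderiv ℝ r' x ![1,0] 1 := by linarith
    rw [h']; ring
  have h3 : ∀ x, fderiv ℝ g0 x ![1, 0] = fderiv ℝ g1 x ![0, 1] := by
    intro x
    have := congrFun (congrFun (hcurl x) 0) 1
    simp [CurlS, Curl, Matrix.add_apply, Matrix.smul_apply, Matrix.transpose_apply,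
      Matrix.of_apply] at this
    rw [hg0def, hg1def, hsub 0 x ![1,0], hsub 1 x ![0,1]]
    linarith
  -- g0 depends only on first coordinate
  have hA : ∀ s t : ℝ, g0 ![s, t] = g0 ![s, 0] := by
    intro s t
    have hder : ∀ u : ℝ, HasDerivAt (fun u => g0 ![s, u]) 0 u := by
      intro u
      have := (hg0 ![s, u]).hasFDerivAt.comp_hasDerivAt u (line2 s u)
      simp [h1] at this; exact this
    exact is_const_of_deriv_eq_zero (fun u => (hder u).differentiableAt)
      (fun u => (hder u).deriv) t 0
  have hB : ∀ s t : ℝ, g1 ![s, t] = g1 ![0, t] := by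
    intro s t
    have hder : ∀ u : ℝ, HasDerivAt (fun u => g1 ![u, t]) 0 u := by
      intro u
      have := (hg1 ![u, t]).hasFDerivAt.comp_hasDerivAt u (line1 t u)
      simp [h2] at this; exact this
    exact is_const_of_deriv_eq_zero (fun u => (hder u).differentiableAt)
      (fun u => (hder u).deriv) s 0
  set F : ℝ → ℝ := fun s => g0 ![s, 0] with hFdef
  set G : ℝ → ℝ := fun t => g1 ![0, t] with hGdef
  have hg0F : ∀ x : Fin 2 → ℝ, g0 x = F (x 0) := by
    intro x; rw [eta2 x]; exact hA (x 0) (x 1)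
  have hg1G : ∀ x : Fin 2 → ℝ, g1 x = G (x 1) := by
    intro x; rw [eta2 x]; exact hB (x 0) (x 1)
  have hF : ∀ s : ℝ, HasDerivAt F (fderiv ℝ g0 ![s, 0] ![1, 0]) s := by
    intro s
    exact (hg0 ![s, 0]).hasFDerivAt.comp_hasDerivAt s (line1 0 s)
  have hG : ∀ t : ℝ, HasDerivAt G (fderiv ℝ g1 ![0, t] ![0, 1]) t := by
    intro t
    exact (hg1 ![0, t]).hasFDerivAt.comp_hasDerivAt t (line2 0 t)
  -- fderiv g0 x ![1,0] = deriv F (x 0) for all x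
  have hD0 : ∀ x : Fin 2 → ℝ, fderiv ℝ g0 x ![1, 0] = deriv F (x 0) := by
    intro x
    have hfun : g0 = fun y : Fin 2 → ℝ => F (y 0) := funext fun y => hg0F y
    have hFd : HasDerivAt F (deriv F (x 0)) (x 0) := (hF (x 0)).differentiableAt.hasDerivAt
    have hproj : HasFDerivAt (fun y : Fin 2 → ℝ => y 0) (proj2 0) x := (proj2 0).hasFDerivAt
    have hcomp : HasFDerivAt (fun y : Fin 2 → ℝ => F (y 0))
        ((deriv F (x 0)) • proj2 0) x :=
      by have := hFd.comp_hasFDerivAt x hproj; exact this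
    rw [hfun, hcomp.fderiv]
    simp [proj2]
  have hD1 : ∀ x : Fin 2 → ℝ, fderiv ℝ g1 x ![0, 1] = deriv G (x 1) := by
    intro x
    have hfun : g1 = fun y : Fin 2 → ℝ => G (y 1) := funext fun y => hg1G y
    have hGd : HasDerivAt G (deriv G (x 1)) (x 1) := (hG (x 1)).differentiableAt.hasDerivAt
    have hproj : HasFDerivAt (fun y : Fin 2 → ℝ => y 1) (proj2 1) x := (proj2 1).hasFDerivAt
    have hcomp : HasFDerivAt (fun y : Fin 2 → ℝ => G (y 1))
        ((deriv G (x 1)) • proj2 1) x :=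
      by have := hGd.comp_hasFDerivAt x hproj; exact this
    rw [hfun, hcomp.fderiv]
    simp [proj2]
  -- the common constant derivative
  set c : ℝ := deriv G 0 with hcdef
  have hFG : ∀ s t : ℝ, deriv F s = deriv G t := by
    intro s t
    have := h3 ![s, t]
    rw [hD0 ![s, t], hD1 ![s, t]] at this
    simpa using this
  have hFc : ∀ s : ℝ, deriv F s = c := fun s => hFG s 0
  have hGc : ∀ t : ℝ, deriv G t = c := fun t => (hFG 0 t).symm.trans (hFc 0)
  -- F and G are affine
  have hFaff : ∀ s : ℝ, F s = c * s + F 0 := by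
    intro s
    have hder : ∀ u : ℝ, HasDerivAt (fun u => F u - c * u) 0 u := by
      intro u
      have h := ((hF u).sub ((hasDerivAt_id u).const_mul c))
      have : fderiv ℝ g0 ![u, 0] ![1, 0] = c := by
        rw [hD0 ![u, 0]]; simpa using hFc u
      simp [this] at h; exact h
    have := is_const_of_deriv_eq_zero (fun u => (hder u).differentiableAt)
      (fun u => (hder u).deriv) s 0
    simp at this; linarith
  have hGaff : ∀ t : ℝ, G t = c * t + G 0 := by
    intro t
    have hder : ∀ u : ℝ, HasDerivAt (fun u => G u - c * u) 0 u := by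
      intro u
      have h := ((hG u).sub ((hasDerivAt_id u).const_mul c))
      have : fderiv ℝ g1 ![0, u] ![0, 1] = c := by
        rw [hD1 ![0, u]]; simpa using hGc u
      simp [this] at h; exact h
    have := is_const_of_deriv_eq_zero (fun u => (hder u).differentiableAt)
      (fun u => (hder u).deriv) t 0
    simp at this; linarith
  -- explicit form of g0, g1
  have hg0x : ∀ x : Fin 2 → ℝ, g0 x = c * x 0 + F 0 := fun x => by
    rw [hg0F x, hFaff (x 0)]
  have hg1x : ∀ x : Fin 2 → ℝ, g1 x = c * x 1 + G 0 := fun x => by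
    rw [hg1G x, hGaff (x 1)]
  -- line condition
  have hl0 : ∀ s : ℝ, c * (a 0 + s * v 0) + F 0 = 0 := by
    intro s
    have := congrFun (hline s) 0
    have hz : g0 (a + s • v) = 0 := by rw [hg0def]; simp [this]
    rw [hg0x] at hz
    simpa [Pi.add_apply, Pi.smul_apply, smul_eq_mul] using hz
  have hl1 : ∀ s : ℝ, c * (a 1 + s * v 1) + G 0 = 0 := by
    intro s
    have := congrFun (hline s) 1
    have hz : g1 (a + s • v) = 0 := by rw [hg1def]; simp [this]
    rw [hg1x] at hz
    simpa [Pi.add_apply, Pi.smul_apply, smul_eq_mul] using hz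
  have hcv0 : c * v 0 = 0 := by have h0 := hl0 0; have h1 := hl0 1; ring_nf at h0 h1 ⊢; linarith
  have hcv1 : c * v 1 = 0 := by have h0 := hl1 0; have h1 := hl1 1; ring_nf at h0 h1 ⊢; linarith
  have hc : c = 0 := by
    by_contra hcne
    apply hv
    funext i; fin_cases i
    · simpa using mul_left_cancel₀ hcne (by rw [hcv0]; ring)
    · simpa using mul_left_cancel₀ hcne (by rw [hcv1]; ring)
  have hF0 : F 0 = 0 := by have := hl0 0; rw [hc] at this; linarith
  have hG0 : G 0 = 0 := by have := hl1 0; rw [hc] at this; linarith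
  intro x
  have e0 : r x 0 = r' x 0 := by
    have h := hg0x x; rw [hc, hF0] at h; simp at h
    have h' : r x 0 - r' x 0 = 0 := h
    linarith
  have e1 : r x 1 = r' x 1 := by
    have h := hg1x x; rw [hc, hG0] at h; simp at h
    have h' : r x 1 - r' x 1 = 0 := h
    linarith
  funext i
  fin_cases i
  · exact e0
  · exact e1
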